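/- Let M be a binary matrix with at most two ones per column, no identical rows, no identical columns, that does not contain (up to row/column permutations) the matrix M_{3_1}^T as a submatrix. Then any two distinct submatrices of M of type M_{I_k} (k ≥ 1) are disjoint: they share no common row and no common column. -/

import Mathlib

/-- The matrix `M_{I_k}`: the `(k+2) × (k+2)` circulant matrix whose row `i` has
ones exactly in columns `i` and `i+1` (mod `k+2`). -/
def MIk (k : ℕ) : Fin (k + 2) → Fin (k + 2) → Bool :=
  fun i j => decide (j = i ∨ j = i + 1)

/-- The `3 × 4` matrix `M_{3_1}` with rows `(1,1,0,0)`, `(0,1,1,0)`, `(0,1,0,1)`. -/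
def M31 : Fin 3 → Fin 4 → Bool :=
  !![true, true, false, false; false, true, true, false; false, true, false, true]

/-- The transpose of `M_{3_1}`. -/
def M31T : Fin 4 → Fin 3 → Bool := fun i j => M31 j i

open Fin.CommRing Fin.NatCast

section Aux

variable {m n : ℕ} {M : Fin m → Fin n → Bool}

/-- A column with two ones has no third one. -/
lemma aux_col_two (hcol : ∀ j, (Finset.univ.filter fun i => M i j = true).card ≤ 2)
    {j : Fin n} {a b v : Fin m} (hab : a ≠ b) (ha : M a j = true) (hb : M b j = true)
    (hv : M v j = true) : v = a ∨ v = b := by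
  by_contra hcon
  push_neg at hcon
  have hsub : ({a, b, v} : Finset (Fin m)) ⊆ Finset.univ.filter (fun i => M i j = true) := by
    intro x hx
    simp only [Finset.mem_insert, Finset.mem_singleton] at hx
    rcases hx with rfl | rfl | rfl <;> simp [ha, hb, hv]
  have h3 : ({a, b, v} : Finset (Fin m)).card = 3 := by
    rw [Finset.card_insert_of_notMem (by simp [hab, Ne.symm hcon.1]),
      Finset.card_insert_of_notMem (by simp [Ne.symm hcon.2])]
    simp
  have := Finset.card_le_card hsub
  rw [h3] at this
  exact absurd (this.trans (hcol j)) (by omega)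

/-- A column with ones at `a`, `b` is zero elsewhere. -/
lemma aux_col_false (hcol : ∀ j, (Finset.univ.filter fun i => M i j = true).card ≤ 2)
    {j : Fin n} {a b v : Fin m} (hab : a ≠ b) (ha : M a j = true) (hb : M b j = true)
    (hva : v ≠ a) (hvb : v ≠ b) : M v j = false := by
  cases hM : M v j with
  | false => rfl
  | true => rcases aux_col_two hcol hab ha hb hM with h | h <;> [exact absurd h hva; exact absurd h hvb]

lemma aux_inj4 {α : Type*} {a b c d : α} (h1 : a ≠ b) (h2 : a ≠ c) (h3 : a ≠ d)
    (h4 : b ≠ c) (h5 : b ≠ d) (h6 : c ≠ d) : Function.Injective ![a, b, c, d] := by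
  intro x y h
  fin_cases x <;> fin_cases y <;> simp_all

lemma aux_inj3 {α : Type*} {a b c : α} (h1 : a ≠ b) (h2 : a ≠ c) (h3 : b ≠ c) :
    Function.Injective ![a, b, c] := by
  intro x y h
  fin_cases x <;> fin_cases y <;> simp_all

/-- No row has three distinct partners. -/
lemma aux_no_three (hcol : ∀ j, (Finset.univ.filter fun i => M i j = true).card ≤ 2)
    (h31 : ¬ ∃ (r : Fin 4 ↪ Fin m) (c : Fin 3 ↪ Fin n), ∀ i j, M (r i) (c j) = M31T i j)
    {v w0 w1 w2 : Fin m} {j0 j1 j2 : Fin n}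
    (hw0 : w0 ≠ v) (hw1 : w1 ≠ v) (hw2 : w2 ≠ v)
    (h01 : w0 ≠ w1) (h02 : w0 ≠ w2) (h12 : w1 ≠ w2)
    (hv0 : M v j0 = true) (hb0 : M w0 j0 = true)
    (hv1 : M v j1 = true) (hb1 : M w1 j1 = true)
    (hv2 : M v j2 = true) (hb2 : M w2 j2 = true) : False := by
  have hj01 : j0 ≠ j1 := by
    rintro rfl
    rcases aux_col_two hcol (Ne.symm hw0) hv0 hb0 hb1 with h | h
    · exact hw1 h
    · exact h01 h.symm
  have hj02 : j0 ≠ j2 := by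
    rintro rfl
    rcases aux_col_two hcol (Ne.symm hw0) hv0 hb0 hb2 with h | h
    · exact hw2 h
    · exact h02 h.symm
  have hj12 : j1 ≠ j2 := by
    rintro rfl
    rcases aux_col_two hcol (Ne.symm hw1) hv1 hb1 hb2 with h | h
    · exact hw2 h
    · exact h12 h.symm
  apply h31
  refine ⟨⟨![w0, v, w1, w2], aux_inj4 hw0 h01 h02 (Ne.symm hw1) (Ne.symm hw2) h12⟩,
    ⟨![j0, j1, j2], aux_inj3 hj01 hj02 hj12⟩, ?_⟩
  have f10 : M w1 j0 = false := aux_col_false hcol (Ne.symm hw0) hv0 hb0 hw1 h01.symm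
  have f20 : M w2 j0 = false := aux_col_false hcol (Ne.symm hw0) hv0 hb0 hw2 h02.symm
  have f01 : M w0 j1 = false := aux_col_false hcol (Ne.symm hw1) hv1 hb1 hw0 h01
  have f21 : M w2 j1 = false := aux_col_false hcol (Ne.symm hw1) hv1 hb1 hw2 h12.symm
  have f02 : M w0 j2 = false := aux_col_false hcol (Ne.symm hw2) hv2 hb2 hw0 h02
  have f12 : M w1 j2 = false := aux_col_false hcol (Ne.symm hw2) hv2 hb2 hw1 h12
  intro i j
  fin_cases i <;> fin_cases j <;>
    simp_all [M31T, M31, Matrix.vecHead, Matrix.vecTail]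

end Aux

section Occ

variable {m n : ℕ} {M : Fin m → Fin n → Bool} {k : ℕ}

lemma fin_two_ne_zero (hk : 1 ≤ k) : (2 : Fin (k + 2)) ≠ 0 := by
  intro h
  have h2 : ((2 : ℕ) : Fin (k + 2)) = 0 := by rw [Nat.cast_ofNat]; exact h
  have hv := congrArg Fin.val h2
  rw [Fin.val_natCast] at hv
  simp only [Fin.val_zero] at hv
  have h3 : (2 : ℕ) % (k + 2) = 2 := Nat.mod_eq_of_lt (by omega)
  rw [h3] at hv
  exact absurd hv (by omega)

lemma occ_one (r : Fin (k + 2) ↪ Fin m) (c : Fin (k + 2) ↪ Fin n)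
    (hocc : ∀ i j, M (r i) (c j) = MIk k i j) {i j : Fin (k + 2)}
    (h : j = i ∨ j = i + 1) : M (r i) (c j) = true := by
  rw [hocc]; simpa [MIk] using h

/-- Characterization of the ones in column `c j`. -/
lemma occ_col (hcol : ∀ j, (Finset.univ.filter fun i => M i j = true).card ≤ 2)
    (r : Fin (k + 2) ↪ Fin m) (c : Fin (k + 2) ↪ Fin n)
    (hocc : ∀ i j, M (r i) (c j) = MIk k i j) (j : Fin (k + 2)) (v : Fin m) :
    M v (c j) = true ↔ v = r (j - 1) ∨ v = r j := by
  have hne : r (j - 1) ≠ r j := by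
    intro h
    have := r.injective h
    exact one_ne_zero (α := Fin (k + 2)) (by linear_combination -this)
  have ha : M (r (j - 1)) (c j) = true := occ_one r c hocc (Or.inr (by ring))
  have hb : M (r j) (c j) = true := occ_one r c hocc (Or.inl rfl)
  constructor
  · intro hv; exact aux_col_two hcol hne ha hb hv
  · rintro (rfl | rfl) <;> assumption

end Occ

section Main

variable {m n : ℕ} {M : Fin m → Fin n → Bool}

/-- Aligned shared edge implies equal ranges. -/
lemma aux_aligned
    (hcol : ∀ j, (Finset.univ.filter fun i => M i j = true).card ≤ 2)
    (hcols : ∀ j1 j2 : Fin n, (∀ i, M i j1 = M i j2) → j1 = j2)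
    (h31 : ¬ ∃ (r : Fin 4 ↪ Fin m) (c : Fin 3 ↪ Fin n), ∀ i j, M (r i) (c j) = M31T i j)
    {k k' : ℕ} (hk : 1 ≤ k) (hk' : 1 ≤ k')
    (r : Fin (k + 2) ↪ Fin m) (c : Fin (k + 2) ↪ Fin n)
    (r' : Fin (k' + 2) ↪ Fin m) (c' : Fin (k' + 2) ↪ Fin n)
    (hocc : ∀ i j, M (r i) (c j) = MIk k i j)
    (hocc' : ∀ i j, M (r' i) (c' j) = MIk k' i j)
    {i : Fin (k + 2)} {i' : Fin (k' + 2)}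
    (hr : r i = r' i') (hc : c (i + 1) = c' (i' + 1)) :
    Set.range r = Set.range r' ∧ Set.range c = Set.range c' := by
  -- the propagation invariant
  have key : ∀ t : ℕ, r (i + t) = r' (i' + t) ∧ c (i + t + 1) = c' (i' + t + 1) := by
    intro t
    induction t with
    | zero => simpa using ⟨hr, hc⟩
    | succ t ih =>
      obtain ⟨ihr, ihc⟩ := ih
      push_cast
      set a : Fin (k + 2) := i + t with ha
      set a' : Fin (k' + 2) := i' + t with ha'
      -- row step
      have hrow : r (a + 1) = r' (a' + 1) := by
        have h1 : M (r (a + 1)) (c' (a' + 1)) = true := by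
          rw [← ihc]; exact occ_one r c hocc (Or.inl rfl)
        rcases (occ_col hcol r' c' hocc' (a' + 1) (r (a + 1))).1 h1 with h | h
        · exfalso
          have h2 : a' + 1 - 1 = a' := by ring
          rw [h2, ← ihr] at h
          have := r.injective h
          exact one_ne_zero (α := Fin (k + 2)) (by linear_combination this)
        · exact h
      refine ⟨by rw [← add_assoc, ← add_assoc]; exact hrow, ?_⟩
      -- column step
      have hne1 : (1 : Fin (k + 2)) ≠ 0 := one_ne_zero
      have hne1' : (1 : Fin (k' + 2)) ≠ 0 := one_ne_zero
      have hpart : r' (a' + 2) = r (a + 2) := by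
        by_contra h12
        by_cases h02 : r' (a' + 2) = r a
        · rw [ihr] at h02
          have := r'.injective h02
          exact fin_two_ne_zero hk' (by linear_combination this)
        · refine aux_no_three hcol h31 (v := r (a + 1)) (w0 := r a) (w1 := r (a + 2))
            (w2 := r' (a' + 2)) (j0 := c (a + 1)) (j1 := c (a + 2)) (j2 := c' (a' + 2))
            ?_ ?_ ?_ ?_ (Ne.symm h02) (Ne.symm h12) ?_ ?_ ?_ ?_ ?_ ?_
          · intro h; have := r.injective h
            exact one_ne_zero (α := Fin (k + 2)) (by linear_combination -this)
          · intro h; have := r.injective h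
            exact one_ne_zero (α := Fin (k + 2)) (by linear_combination this)
          · intro h
            rw [hrow] at h
            have := r'.injective h
            exact one_ne_zero (α := Fin (k' + 2)) (by linear_combination this)
          · intro h; have := r.injective h
            exact fin_two_ne_zero hk (by linear_combination -this)
          · exact occ_one r c hocc (Or.inl rfl)
          · exact occ_one r c hocc (Or.inr (by ring))
          · exact occ_one r c hocc (Or.inr (by ring))
          · exact occ_one r c hocc (Or.inl rfl)
          · rw [hrow]; exact occ_one r' c' hocc' (Or.inr (by ring))
          · exact occ_one r' c' hocc' (Or.inl rfl)
      have hcoleq : c (a + 2) = c' (a' + 2) := by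
        apply hcols
        intro i0
        rw [Bool.eq_iff_iff]
        rw [occ_col hcol r c hocc, occ_col hcol r' c' hocc']
        have e1 : a + 2 - 1 = a + 1 := by ring
        have e2 : a' + 2 - 1 = a' + 1 := by ring
        rw [e1, e2, hrow, hpart]
      have e3 : a + 2 = a + (1 : Fin (k+2)) + 1 := by ring
      have e4 : a' + 2 = a' + (1 : Fin (k'+2)) + 1 := by ring
      rw [e3, e4] at hcoleq
      rw [← add_assoc, ← add_assoc]
      exact hcoleq
  -- divisibility
  have dvd1 : (k' + 2) ∣ (k + 2) := by
    have h1 := (key (k + 2)).1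
    rw [Fin.natCast_self, add_zero, hr] at h1
    have h2 := r'.injective h1
    have h3 : ((k + 2 : ℕ) : Fin (k' + 2)) = 0 := by linear_combination -h2
    have hv := congrArg Fin.val h3
    rw [Fin.val_natCast] at hv
    simp only [Fin.val_zero] at hv
    exact Nat.dvd_of_mod_eq_zero hv
  have dvd2 : (k + 2) ∣ (k' + 2) := by
    have h1 := (key (k' + 2)).1
    rw [Fin.natCast_self (k' + 2), add_zero, ← hr] at h1
    have h2 := r.injective h1.symm
    have h3 : ((k' + 2 : ℕ) : Fin (k + 2)) = 0 := by linear_combination -h2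
    have hv := congrArg Fin.val h3
    rw [Fin.val_natCast] at hv
    simp only [Fin.val_zero] at hv
    exact Nat.dvd_of_mod_eq_zero hv
  have hkk : k = k' := by
    have := Nat.dvd_antisymm dvd2 dvd1
    omega
  subst hkk
  constructor
  · apply Set.eq_of_subset_of_subset
    · rintro _ ⟨a, rfl⟩
      have e : i + ((a - i).val : Fin (k + 2)) = a := by
        rw [Fin.cast_val_eq_self]; ring
      rw [← e, (key (a - i).val).1]
      exact ⟨_, rfl⟩
    · rintro _ ⟨a, rfl⟩
      have e : i' + ((a - i').val : Fin (k + 2)) = a := by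
        rw [Fin.cast_val_eq_self]; ring
      rw [← e, ← (key (a - i').val).1]
      exact ⟨_, rfl⟩
  · apply Set.eq_of_subset_of_subset
    · rintro _ ⟨a, rfl⟩
      have e : i + ((a - i - 1).val : Fin (k + 2)) + 1 = a := by
        rw [Fin.cast_val_eq_self]; ring
      rw [← e, (key (a - i - 1).val).2]
      exact ⟨_, rfl⟩
    · rintro _ ⟨a, rfl⟩
      have e : i' + ((a - i' - 1).val : Fin (k + 2)) + 1 = a := by
        rw [Fin.cast_val_eq_self]; ring
      rw [← e, ← (key (a - i' - 1).val).2]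
      exact ⟨_, rfl⟩

/-- A shared row implies equal ranges. -/
lemma aux_shared_row
    (hcol : ∀ j, (Finset.univ.filter fun i => M i j = true).card ≤ 2)
    (hcols : ∀ j1 j2 : Fin n, (∀ i, M i j1 = M i j2) → j1 = j2)
    (h31 : ¬ ∃ (r : Fin 4 ↪ Fin m) (c : Fin 3 ↪ Fin n), ∀ i j, M (r i) (c j) = M31T i j)
    {k k' : ℕ} (hk : 1 ≤ k) (hk' : 1 ≤ k')
    (r : Fin (k + 2) ↪ Fin m) (c : Fin (k + 2) ↪ Fin n)
    (r' : Fin (k' + 2) ↪ Fin m) (c' : Fin (k' + 2) ↪ Fin n)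
    (hocc : ∀ i j, M (r i) (c j) = MIk k i j)
    (hocc' : ∀ i j, M (r' i) (c' j) = MIk k' i j)
    {i : Fin (k + 2)} {i' : Fin (k' + 2)} (hr : r i = r' i') :
    Set.range r = Set.range r' ∧ Set.range c = Set.range c' := by
  -- r'(i'+1) is r(i+1) or r(i-1)
  have hcase : r' (i' + 1) = r (i + 1) ∨ r' (i' + 1) = r (i - 1) := by
    by_contra hcon
    push_neg at hcon
    obtain ⟨h1, h2⟩ := hcon
    refine aux_no_three hcol h31 (v := r i) (w0 := r (i - 1)) (w1 := r (i + 1))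
      (w2 := r' (i' + 1)) (j0 := c i) (j1 := c (i + 1)) (j2 := c' (i' + 1))
      ?_ ?_ ?_ ?_ (Ne.symm h2) (Ne.symm h1) ?_ ?_ ?_ ?_ ?_ ?_
    · intro h; have := r.injective h
      exact one_ne_zero (α := Fin (k + 2)) (by linear_combination -this)
    · intro h; have := r.injective h
      exact one_ne_zero (α := Fin (k + 2)) (by linear_combination this)
    · intro h
      rw [hr] at h
      have := r'.injective h
      exact one_ne_zero (α := Fin (k' + 2)) (by linear_combination this)
    · intro h; have := r.injective h
      exact fin_two_ne_zero hk (by linear_combination -this)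
    · exact occ_one r c hocc (Or.inl rfl)
    · exact occ_one r c hocc (Or.inr (by ring))
    · exact occ_one r c hocc (Or.inr rfl)
    · exact occ_one r c hocc (Or.inl rfl)
    · rw [hr]; exact occ_one r' c' hocc' (Or.inr rfl)
    · exact occ_one r' c' hocc' (Or.inl rfl)
  rcases hcase with hcase | hcase
  · -- aligned case
    have hc : c (i + 1) = c' (i' + 1) := by
      apply hcols
      intro i0
      rw [Bool.eq_iff_iff]
      rw [occ_col hcol r c hocc, occ_col hcol r' c' hocc']
      have e1 : i + 1 - 1 = i := by ring
      have e2 : i' + 1 - 1 = i' := by ring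
      rw [e1, e2, hr, hcase]
    exact aux_aligned hcol hcols h31 hk hk' r c r' c' hocc hocc' hr hc
  · -- reversed case: use the reversal of (r, c)
    set r₂ : Fin (k + 2) ↪ Fin m := ⟨fun x => r (-x), r.injective.comp neg_injective⟩ with hr₂
    set c₂ : Fin (k + 2) ↪ Fin n := ⟨fun x => c (1 - x),
      c.injective.comp (fun x y h => by linear_combination -h)⟩ with hc₂
    have hocc₂ : ∀ a b, M (r₂ a) (c₂ b) = MIk k a b := by
      intro a b
      simp only [hr₂, hc₂, Function.Embedding.coeFn_mk]
      rw [hocc]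
      simp only [MIk, decide_eq_decide]
      constructor
      · rintro (h | h)
        · exact Or.inr (by linear_combination -h)
        · exact Or.inl (by linear_combination -h)
      · rintro (h | h)
        · exact Or.inr (by linear_combination -h)
        · exact Or.inl (by linear_combination -h)
    have hrr : r₂ (-i) = r' i' := by
      simp only [hr₂, Function.Embedding.coeFn_mk, neg_neg]; exact hr
    have hcc : c₂ (-i + 1) = c' (i' + 1) := by
      apply hcols
      intro i0
      rw [Bool.eq_iff_iff]
      rw [occ_col hcol r₂ c₂ hocc₂, occ_col hcol r' c' hocc']
      have e1 : -i + 1 - 1 = -i := by ring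
      have e2 : i' + 1 - 1 = i' := by ring
      rw [e1, e2, hrr]
      have e3 : r₂ (-i + 1) = r (i - 1) := by
        simp only [hr₂, Function.Embedding.coeFn_mk]
        congr 1; ring
      rw [e3, ← hcase]
    obtain ⟨hR, hC⟩ := aux_aligned hcol hcols h31 hk hk' r₂ c₂ r' c' hocc₂ hocc' hrr hcc
    constructor
    · rw [← hR]
      have : (r₂ : Fin (k + 2) → Fin m) = r ∘ (fun x => -x) := rfl
      rw [this, Function.Surjective.range_comp neg_surjective]
    · rw [← hC]
      have : (c₂ : Fin (k + 2) → Fin n) = c ∘ (fun x => 1 - x) := rfl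
      rw [this, Function.Surjective.range_comp (fun x => ⟨1 - x, by ring⟩)]

end Main

/-- Let `M` be a binary matrix with at most two ones per column, no identical
rows or columns, and not containing `M_{3_1}^T` (up to permutations) as a
submatrix.  Then any two distinct submatrices of `M` of type `M_{I_k}` (`k ≥ 1`)
share no common row and no common column. -/
theorem MIk_submatrices_disjoint (m n : ℕ) (M : Fin m → Fin n → Bool)
    (hcol : ∀ j, (Finset.univ.filter fun i => M i j = true).card ≤ 2)
    (hrows : ∀ i1 i2 : Fin m, (∀ j, M i1 j = M i2 j) → i1 = i2)
    (hcols : ∀ j1 j2 : Fin n, (∀ i, M i j1 = M i j2) → j1 = j2)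
    (h31 : ¬ ∃ (r : Fin 4 ↪ Fin m) (c : Fin 3 ↪ Fin n), ∀ i j, M (r i) (c j) = M31T i j)
    {k k' : ℕ} (hk : 1 ≤ k) (hk' : 1 ≤ k')
    (r : Fin (k + 2) ↪ Fin m) (c : Fin (k + 2) ↪ Fin n)
    (r' : Fin (k' + 2) ↪ Fin m) (c' : Fin (k' + 2) ↪ Fin n)
    (hocc : ∀ i j, M (r i) (c j) = MIk k i j)
    (hocc' : ∀ i j, M (r' i) (c' j) = MIk k' i j)
    (hdist : Set.range r ≠ Set.range r' ∨ Set.range c ≠ Set.range c') :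
    Disjoint (Set.range r) (Set.range r') ∧ Disjoint (Set.range c) (Set.range c') := by
  have contra : ∀ (i : Fin (k + 2)) (i' : Fin (k' + 2)), r i = r' i' → False := by
    intro i i' hri
    obtain ⟨hR, hC⟩ := aux_shared_row hcol hcols h31 hk hk' r c r' c' hocc hocc' hri
    rcases hdist with h | h <;> [exact h hR; exact h hC]
  constructor
  · rw [Set.disjoint_left]
    rintro _ ⟨a, rfl⟩ ⟨b, hb⟩
    exact contra a b hb.symm
  · rw [Set.disjoint_left]
    rintro _ ⟨a, rfl⟩ ⟨b, hb⟩
    -- shared column: ones of that column give a shared row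
    have h1 : M (r a) (c a) = true := occ_one r c hocc (Or.inl rfl)
    rw [← hb] at h1
    rcases (occ_col hcol r' c' hocc' b (r a)).1 h1 with h | h
    · exact contra a (b - 1) h
    · exact contra a b h
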